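/- Let G be a loop-less digraph on [n] with minimum in-degree at least 1, and let G̊ be G with a loop added at every vertex. If G is symmetric (i.e., an undirected graph), then G̊ admits a boolean function f : {0,1}ⁿ → {0,1}ⁿ with interaction digraph G̊ such that f³ is the constant 0; in general (not necessarily symmetric), G̊ admits such an f with f⁴ constant 0. -/

import Mathlib

/-- `f i` depends essentially on coordinate `j` (boolean states). -/
def dependsB {n : ℕ} (f : (Fin n → Bool) → (Fin n → Bool)) (j i : Fin n) : Prop :=
  ∃ x y : Fin n → Bool, (∀ k, k ≠ j → x k = y k) ∧ f x i ≠ f y i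

section Net
variable {n : ℕ}

/-- The boolean network associated to in-neighborhoods `G` and a set `I` of negated vertices. -/
noncomputable def netF (G : Fin n → Finset (Fin n)) (I : Fin n → Prop) :
    (Fin n → Bool) → (Fin n → Bool) :=
  fun x i => @decide ((x i = true ↔ ¬ I i) ∧ ∀ j ∈ G i, x j = true) (Classical.propDecidable _)

lemma netF_spec (G : Fin n → Finset (Fin n)) (I : Fin n → Prop) (x : Fin n → Bool) (i : Fin n) :
    netF G I x i = true ↔ ((x i = true ↔ ¬ I i) ∧ ∀ j ∈ G i, x j = true) := by
  simp [netF]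

lemma netF_key (G : Fin n → Finset (Fin n)) (I : Fin n → Prop) (w : Fin n → Bool) (v : Fin n)
    (hv : ¬ I v) (h : netF G I (netF G I w) v = true) :
    ∀ j ∈ G v, ¬ I j ∧ netF G I w j = true := by
  rw [netF_spec] at h
  have h1 : netF G I w v = true := h.1.2 hv
  rw [netF_spec] at h1
  intro j hj
  have h2 := h.2 j hj
  have h3 := (netF_spec G I w j).1 h2
  exact ⟨fun hIj => by simp [h1.2 j hj] at h3; exact h3.1 hIj, h2⟩

lemma netF_nil4 (G : Fin n → Finset (Fin n)) (I : Fin n → Prop)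
    (hB1 : ∀ i, ¬ I i → ∃ j ∈ G i, I j)
    (hB2 : ∀ i, I i → ∃ j ∈ G i, ¬ I j ∨ ∃ k ∈ G j, ¬ I k) :
    (netF G I)^[4] = Function.const _ (fun _ => false) := by
  funext x
  funext i
  show netF G I (netF G I (netF G I (netF G I x))) i = false
  by_contra h
  rw [Bool.not_eq_false] at h
  by_cases hI : I i
  · obtain ⟨j, hj, hcase⟩ := hB2 i hI
    have h3 : netF G I (netF G I (netF G I x)) j = true := ((netF_spec G I _ i).1 h).2 j hj
    rcases hcase with hjI | ⟨k, hk, hkI⟩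
    · obtain ⟨k, hk, hkI⟩ := hB1 j hjI
      exact (netF_key G I (netF G I x) j hjI h3 k hk).1 hkI
    · have h2 : netF G I (netF G I x) k = true := ((netF_spec G I _ j).1 h3).2 k hk
      obtain ⟨l, hl, hlI⟩ := hB1 k hkI
      exact (netF_key G I x k hkI h2 l hl).1 hlI
  · obtain ⟨j, hj, hjI⟩ := hB1 i hI
    exact (netF_key G I (netF G I (netF G I x)) i hI h j hj).1 hjI

lemma netF_nil3 (G : Fin n → Finset (Fin n)) (I : Fin n → Prop)
    (hB1 : ∀ i, ¬ I i → ∃ j ∈ G i, I j)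
    (hS2 : ∀ i, I i → ∃ j ∈ G i, ¬ I j) :
    (netF G I)^[3] = Function.const _ (fun _ => false) := by
  funext x
  funext i
  show netF G I (netF G I (netF G I x)) i = false
  by_contra h
  rw [Bool.not_eq_false] at h
  by_cases hI : I i
  · obtain ⟨j, hj, hjI⟩ := hS2 i hI
    have h2 : netF G I (netF G I x) j = true := ((netF_spec G I _ i).1 h).2 j hj
    obtain ⟨k, hk, hkI⟩ := hB1 j hjI
    exact (netF_key G I x j hjI h2 k hk).1 hkI
  · obtain ⟨j, hj, hjI⟩ := hB1 i hI
    exact (netF_key G I (netF G I x) i hI h j hj).1 hjI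

lemma netF_deps (G : Fin n → Finset (Fin n)) (I : Fin n → Prop)
    (hloopless : ∀ i, i ∉ G i) :
    ∀ j i, dependsB (netF G I) j i ↔ j ∈ insert i (G i) := by
  intro j i
  constructor
  · rintro ⟨x, y, hagree, hne⟩
    by_contra hj
    simp only [Finset.mem_insert, not_or] at hj
    apply hne
    have hxi : x i = y i := hagree i (fun h => hj.1 (h ▸ rfl))
    have hxG : ∀ k ∈ G i, x k = y k := fun k hk =>
      hagree k (fun h => hj.2 (h ▸ hk))
    simp only [netF]
    rw [decide_eq_decide]
    constructor
    · rintro ⟨h1, h2⟩; exact ⟨by rw [← hxi]; exact h1, fun k hk => by rw [← hxG k hk]; exact h2 k hk⟩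
    · rintro ⟨h1, h2⟩; exact ⟨by rw [hxi]; exact h1, fun k hk => by rw [hxG k hk]; exact h2 k hk⟩
  · intro hj
    rcases Finset.mem_insert.1 hj with rfl | hjG
    · -- j = i
      classical
      refine ⟨fun k => if k = j then decide (¬ I j) else true,
              fun k => if k = j then !decide (¬ I j) else true,
              fun k hk => by simp [hk], ?_⟩
      have h1 : netF G I (fun k => if k = j then decide (¬ I j) else true) j = true := by
        rw [netF_spec]
        constructor
        · simp
        · intro k hk
          have : k ≠ j := fun h => hloopless j (h ▸ hk)
          simp [this]
      have h2 : netF G I (fun k => if k = j then !decide (¬ I j) else true) j = false := by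
        rw [Bool.eq_false_iff, Ne, netF_spec]
        rintro ⟨h, -⟩
        simp only [if_pos rfl] at h
        by_cases hIj : I j <;> simp [hIj] at h
      rw [h1, h2]; simp
    · -- j ∈ G i, j ≠ i
      classical
      have hji : j ≠ i := fun h => hloopless i (h ▸ hjG)
      refine ⟨fun k => if k = i then decide (¬ I i) else true,
              fun k => if k = j then false else if k = i then decide (¬ I i) else true,
              fun k hk => by simp [hk], ?_⟩
      have h1 : netF G I (fun k => if k = i then decide (¬ I i) else true) i = true := by
        rw [netF_spec]
        constructor
        · simp
        · intro k hk
          have : k ≠ i := fun h => hloopless i (h ▸ hk)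
          simp [this]
      have h2 : netF G I (fun k => if k = j then false else if k = i then decide (¬ I i) else true) i
          = false := by
        rw [Bool.eq_false_iff, Ne, netF_spec]
        rintro ⟨-, h⟩
        have := h j hjG
        simp at this
      rw [h1, h2]; simp

end Net


lemma exists_indep {n : ℕ} (G : Fin n → Finset (Fin n)) (hloopless : ∀ i, i ∉ G i)
    (hsym : ∀ i j, j ∈ G i ↔ i ∈ G j) :
    ∃ I : Finset (Fin n), (∀ i ∈ I, ∀ j ∈ G i, j ∉ I) ∧ (∀ i, i ∉ I → ∃ j ∈ G i, j ∈ I) := by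
  classical
  set S : Finset (Finset (Fin n)) :=
    Finset.univ.filter (fun I => ∀ i ∈ I, ∀ j ∈ G i, j ∉ I) with hS
  have hSne : S.Nonempty := ⟨∅, by simp [hS]⟩
  obtain ⟨I, hIS, hImax⟩ := S.exists_maximal hSne
  have hind : ∀ i ∈ I, ∀ j ∈ G i, j ∉ I := by
    have := Finset.mem_filter.1 hIS
    exact this.2
  refine ⟨I, hind, ?_⟩
  intro i hi
  by_contra hno
  push_neg at hno
  have hins : insert i I ∈ S := by
    rw [hS, Finset.mem_filter]
    refine ⟨Finset.mem_univ _, ?_⟩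
    intro a ha b hb
    rcases Finset.mem_insert.1 ha with rfl | haI
    · intro hbmem
      rcases Finset.mem_insert.1 hbmem with rfl | hbI
      · exact hloopless _ hb
      · exact hno _ hb hbI
    · intro hbmem
      rcases Finset.mem_insert.1 hbmem with rfl | hbI
      · exact hno _ ((hsym _ _).1 hb) haI
      · exact hind _ haI _ hb hbI
  exact hi (hImax hins (Finset.subset_insert _ _) (Finset.mem_insert_self _ _))


section Orbit
variable {n : ℕ}

open Classical in
noncomputable def RF (p : Fin n → Fin n) (i : Fin n) : Finset (Fin n) :=
  Finset.univ.filter (fun x => (∃ k, p^[k] i = x) ∧ ∃ ℓ, 0 < ℓ ∧ p^[ℓ] x = x)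

lemma mem_RF (p : Fin n → Fin n) (i x : Fin n) :
    x ∈ RF p i ↔ (∃ k, p^[k] i = x) ∧ ∃ ℓ, 0 < ℓ ∧ p^[ℓ] x = x := by
  classical
  rw [RF, Finset.mem_filter]
  simp only [Finset.mem_univ, true_and]

lemma RF_nonempty (p : Fin n → Fin n) (i : Fin n) : (RF p i).Nonempty := by
  obtain ⟨a, b, hne, heq⟩ := Finite.exists_ne_map_eq_of_infinite (fun k : ℕ => p^[k] i)
  have heq' : p^[a] i = p^[b] i := heq
  rcases hne.lt_or_gt with h | h
  · exact ⟨p^[a] i, (mem_RF p i _).2 ⟨⟨a, rfl⟩, b - a, by omega, by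
      rw [← Function.iterate_add_apply, show b - a + a = b by omega]; exact heq'.symm⟩⟩
  · exact ⟨p^[b] i, (mem_RF p i _).2 ⟨⟨b, rfl⟩, a - b, by omega, by
      rw [← Function.iterate_add_apply, show a - b + b = a by omega]; exact heq'⟩⟩

noncomputable def mF (p : Fin n → Fin n) (i : Fin n) : Fin n :=
  (RF p i).min' (RF_nonempty p i)

lemma mF_mem (p : Fin n → Fin n) (i : Fin n) : mF p i ∈ RF p i := Finset.min'_mem _ _

lemma mF_reach (p : Fin n → Fin n) (i : Fin n) : ∃ k, p^[k] i = mF p i :=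
  ((mem_RF p i _).1 (mF_mem p i)).1

lemma mF_per (p : Fin n → Fin n) (i : Fin n) : ∃ ℓ, 0 < ℓ ∧ p^[ℓ] (mF p i) = mF p i :=
  ((mem_RF p i _).1 (mF_mem p i)).2

lemma RF_p (p : Fin n → Fin n) (i : Fin n) : RF p (p i) = RF p i := by
  ext x
  rw [mem_RF, mem_RF]
  constructor
  · rintro ⟨⟨k, hk⟩, hper⟩
    exact ⟨⟨k + 1, by rw [Function.iterate_succ_apply]; exact hk⟩, hper⟩
  · rintro ⟨⟨k, hk⟩, ℓ, hℓ, hper⟩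
    refine ⟨?_, ℓ, hℓ, hper⟩
    match k, hk with
    | 0, hk =>
      have hx : i = x := by simpa using hk
      subst hx
      refine ⟨ℓ - 1, ?_⟩
      have h1 : p^[ℓ - 1] (p i) = p^[ℓ] i := by
        rw [← Function.iterate_succ_apply]
        congr 1
        omega
      rw [h1]; exact hper
    | k + 1, hk =>
      exact ⟨k, by rw [← Function.iterate_succ_apply]; exact hk⟩

lemma mF_p (p : Fin n → Fin n) (i : Fin n) : mF p (p i) = mF p i := by
  have key : ∀ (s t : Finset (Fin n)) (hs : s.Nonempty) (ht : t.Nonempty),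
      s = t → s.min' hs = t.min' ht := by rintro s t hs ht rfl; rfl
  exact key _ _ _ _ (RF_p p i)

open Classical in
noncomputable def tF (p : Fin n → Fin n) (i : Fin n) : ℕ := Nat.find (mF_reach p i)

open Classical in
noncomputable def LF (p : Fin n → Fin n) (i : Fin n) : ℕ := Nat.find (mF_per p i)

lemma tF_spec (p : Fin n → Fin n) (i : Fin n) : p^[tF p i] i = mF p i :=
  Nat.find_spec (mF_reach p i)

lemma LF_spec (p : Fin n → Fin n) (i : Fin n) :
    0 < LF p i ∧ p^[LF p i] (mF p i) = mF p i := Nat.find_spec (mF_per p i)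

open Classical in
lemma LF_p (p : Fin n → Fin n) (i : Fin n) : LF p (p i) = LF p i := by
  have key : ∀ (x y : Fin n) (hx : ∃ ℓ, 0 < ℓ ∧ p^[ℓ] x = x) (hy : ∃ ℓ, 0 < ℓ ∧ p^[ℓ] y = y),
      x = y → Nat.find hx = Nat.find hy := by rintro x y hx hy rfl; rfl
  exact key _ _ _ _ (mF_p p i)

lemma LF_two (p : Fin n → Fin n) (hpne : ∀ i, p i ≠ i) (i : Fin n) : 2 ≤ LF p i := by
  have h := LF_spec p i
  by_contra hcon
  have h1 : LF p i = 1 := by omega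
  rw [h1] at h
  exact hpne (mF p i) (by simpa using h.2)

lemma tF_step (p : Fin n → Fin n) (hpne : ∀ i, p i ≠ i) (i : Fin n) :
    tF p (p i) = if tF p i = 0 then LF p i - 1 else tF p i - 1 := by
  have hL := LF_two p hpne i
  by_cases h0 : tF p i = 0
  · have hmi : i = mF p i := by
      have := tF_spec p i
      rwa [h0, Function.iterate_zero_apply] at this
    rw [if_pos h0]
    apply le_antisymm
    · unfold tF
      apply Nat.find_le
      show p^[LF p i - 1] (p i) = mF p (p i)
      rw [mF_p p i]
      have h1 : p^[LF p i - 1] (p i) = p^[LF p i] i := by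
        rw [← Function.iterate_succ_apply]
        congr 1
        omega
      calc p^[LF p i - 1] (p i) = p^[LF p i] i := h1
        _ = p^[LF p i] (mF p i) := congrArg (p^[LF p i]) hmi
        _ = mF p i := (LF_spec p i).2
    · by_contra hcon
      push_neg at hcon
      have hs : p^[tF p (p i)] (p i) = mF p (p i) := tF_spec p (p i)
      rw [mF_p p i, ← hmi] at hs
      have h2 : p^[tF p (p i) + 1] i = i := by
        rw [Function.iterate_succ_apply]; exact hs
      have h3 : p^[tF p (p i) + 1] (mF p i) = mF p i := by rw [← hmi]; exact h2
      exact Nat.find_min (mF_per p i) (show tF p (p i) + 1 < LF p i by omega)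
        ⟨by omega, h3⟩
  · rw [if_neg h0]
    apply le_antisymm
    · unfold tF
      apply Nat.find_le
      show p^[tF p i - 1] (p i) = mF p (p i)
      rw [mF_p p i]
      have h1 : p^[tF p i - 1] (p i) = p^[tF p i] i := by
        rw [← Function.iterate_succ_apply]
        congr 1
        omega
      rw [h1, tF_spec p i]
    · by_contra hcon
      push_neg at hcon
      have hs : p^[tF p (p i)] (p i) = mF p (p i) := tF_spec p (p i)
      rw [mF_p p i] at hs
      have h2 : p^[tF p (p i) + 1] i = mF p i := by
        rw [Function.iterate_succ_apply]; exact hs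
      exact Nat.find_min (mF_reach p i) (show tF p (p i) + 1 < tF p i by omega) h2

lemma exists_good (p : Fin n → Fin n) (hpne : ∀ i, p i ≠ i) :
    ∃ c : Fin n → Prop,
      (∀ i, ¬ c i → c (p i)) ∧ (∀ i, c i → ¬ c (p i) ∨ ¬ c (p (p i))) := by
  refine ⟨fun i => if tF p i < LF p i
      then (tF p i % 2 = 1 ∨ (LF p i % 2 = 1 ∧ tF p i = LF p i - 1))
      else (tF p i - LF p i) % 2 = 1, ?_, ?_⟩ <;>
  · intro i
    beta_reduce
    have h2 := LF_two p hpne i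
    have e1 := tF_step p hpne i
    have e2 := tF_step p hpne (p i)
    have l1 := LF_p p i
    have l2 := LF_p p (p i)
    rw [l1] at e2
    simp only [l2, l1]
    split_ifs at e1 e2 ⊢ <;> omega

end Orbit


/-- for a loop-less digraph `G` (in-neighborhoods `G i`) with minimum in-degree
at least 1, the digraph `G̊` obtained by adding a loop on every vertex admits a boolean
function `f` with interaction digraph `G̊` and `f⁴ = 0`; if moreover `G` is symmetric, one can
get `f³ = 0`. -/
theorem stmt17 (n : ℕ) (G : Fin n → Finset (Fin n))
    (hloopless : ∀ i, i ∉ G i)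
    (hdeg : ∀ i, (G i).Nonempty) :
    (∃ f : (Fin n → Bool) → (Fin n → Bool),
      (∀ j i, dependsB f j i ↔ j ∈ insert i (G i)) ∧
      f^[4] = Function.const _ (fun _ => false)) ∧
    ((∀ i j, j ∈ G i ↔ i ∈ G j) →
      ∃ f : (Fin n → Bool) → (Fin n → Bool),
        (∀ j i, dependsB f j i ↔ j ∈ insert i (G i)) ∧
        f^[3] = Function.const _ (fun _ => false)) := by
  classical
  constructor
  · choose p hp using hdeg
    have hpne : ∀ i, p i ≠ i := by
      intro i h
      have hmem := hp i
      rw [h] at hmem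
      exact hloopless i hmem
    obtain ⟨c, hc1, hc2⟩ := exists_good p hpne
    refine ⟨netF G c, netF_deps G c hloopless, ?_⟩
    apply netF_nil4
    · intro i hi; exact ⟨p i, hp i, hc1 i hi⟩
    · intro i hi
      rcases hc2 i hi with h | h
      · exact ⟨p i, hp i, Or.inl h⟩
      · exact ⟨p i, hp i, Or.inr ⟨p (p i), hp (p i), h⟩⟩
  · intro hsym
    obtain ⟨I, hind, hdom⟩ := exists_indep G hloopless hsym
    refine ⟨netF G (fun i => i ∈ I), netF_deps G _ hloopless, ?_⟩
    apply netF_nil3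
    · intro i hi; exact hdom i hi
    · intro i hi
      obtain ⟨j, hj⟩ := hdeg i
      exact ⟨j, hj, hind i hi j hj⟩
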